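/- Let s ∈ S and let ŝ : 𝒞 → 𝒞 be a lift of s consistent with chain structure (for instance any element of a chain semigroup lifting s). Then for every maximal chain C and every level 1 ≤ i ≤ h(X), the states of approximation satisfy (α_i(C^pos))·s ⊆ α_i((ŝ(C))^pos). -/

import Mathlib

namespace Holonomy

variable {X : Type*}

/-- The extended image set `I = {X·s : s ∈ S} ∪ {X} ∪ {{x} : x ∈ X}`,
with the state set taken to be `Set.univ`. -/
def extImgs (S : Set (X → X)) : Set (Set X) :=
  {P : Set X | ∃ s ∈ S, P = s '' (Set.univ : Set X)} ∪ {(Set.univ : Set X)} ∪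
    {P : Set X | ∃ x : X, P = {x}}

/-- `C` is a maximal chain (w.r.t. inclusion) inside the family `I`. -/
def IsMaxChainIn (I : Set (Set X)) (C : Set (Set X)) : Prop :=
  C ⊆ I ∧ IsChain (· ⊆ ·) C ∧
    ∀ D : Set (Set X), D ⊆ I → IsChain (· ⊆ ·) D → C ⊆ D → D = C

/-- `𝒞`, the maximal chains in the extended image set. -/
def MaxChain (S : Set (X → X)) : Type _ :=
  {C : Set (Set X) // IsMaxChainIn (extImgs S) C}

/-- The action of `s` on a chain, `C·s = {P·s : P ∈ C}`. -/
def chainAct (C : Set (Set X)) (s : X → X) : Set (Set X) :=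
  (fun P => s '' P) '' C

/-- Chains `C` and `D` agree down to `P`. -/
def AgreeDownTo (C D : Set (Set X)) (P : Set X) : Prop :=
  P ∈ C ∧ P ∈ D ∧ ∀ Q : Set X, P ⊆ Q → (Q ∈ C ↔ Q ∈ D)

/-- `sh : 𝒞 → 𝒞` is a lift of `s`: `C·s ⊆ sh C` for every maximal chain `C`. -/
def IsLift (S : Set (X → X)) (s : X → X) (sh : MaxChain S → MaxChain S) : Prop :=
  ∀ C : MaxChain S, chainAct C.val s ⊆ (sh C).val

/-- `sh` is consistent with chain structure. -/
def Consistent (S : Set (X → X)) (s : X → X) (sh : MaxChain S → MaxChain S) : Prop :=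
  ∀ (C C' : MaxChain S) (P : Set X),
    AgreeDownTo C.val C'.val P → AgreeDownTo (sh C).val (sh C').val (s '' P)

/-- Product of a list of transformations, in left-to-right (right-action) order:
`prodList [a₁,…,a_k] = a₁⋯a_k`, i.e. `x ↦ a_k (⋯ (a₁ x))`. -/
def prodList {α : Type*} (l : List (α → α)) : α → α :=
  fun x => l.foldl (fun y f => f y) x

/-- Subduction: `P ⊆_S Q` iff `P ⊆ Q·s` for some `s ∈ S¹ = S ∪ {id}`. -/
def Subduction (S : Set (X → X)) (P Q : Set X) : Prop :=
  ∃ s ∈ insert (id : X → X) S, P ⊆ s '' Q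

/-- `P ≡_S Q`. -/
def SubEquiv (S : Set (X → X)) (P Q : Set X) : Prop :=
  Subduction S P Q ∧ Subduction S Q P

/-- Strict subduction `P ⊂_S Q`. -/
def SSubduction (S : Set (X → X)) (P Q : Set X) : Prop :=
  Subduction S P Q ∧ ¬ Subduction S Q P

/-- `P` is not a singleton. -/
def nonSingleton (P : Set X) : Prop := ¬ ∃ x : X, P = {x}

/-- The height of `Q`: the largest length of a strict subduction chain of
non-singleton members of `I` ending at `Q` (`0` for singletons, since then no
such chain exists). -/
noncomputable def height (S : Set (X → X)) (Q : Set X) : ℕ :=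
  sSup {n : ℕ | ∃ l : List (Set X), l.length = n ∧
    (∀ R ∈ l, R ∈ extImgs S ∧ nonSingleton R) ∧
    l.Chain' (SSubduction S) ∧ l.getLast? = some Q}

/-- Depth: `d(Q) = h(X) - h(Q) + 1`. -/
noncomputable def depth (S : Set (X → X)) (Q : Set X) : ℕ :=
  height S (Set.univ : Set X) - height S Q + 1

/-- The tiles of `P`: maximal elements (w.r.t. inclusion) of `{Q ∈ I : Q ⊊ P}`. -/
def tiles (S : Set (X → X)) (P : Set X) : Set (Set X) :=
  {Q | (Q ∈ extImgs S ∧ Q ⊂ P) ∧ ∀ R : Set X, R ∈ extImgs S → R ⊂ P → Q ⊆ R → Q = R}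

/-- The permutator group `G_P` of `P`, as a set of permutations of `P`. -/
def permutator (S : Set (X → X)) (P : Set X) : Set (Equiv.Perm ↥P) :=
  {σ | ∃ s ∈ S, s '' P = P ∧ ∀ p : ↥P, (σ p : X) = s (p : X)}

/-- The holonomy group `H_P` of `P`, as a set of permutations of `tiles P`. -/
def holonomyGroup (S : Set (X → X)) (P : Set X) : Set (Equiv.Perm ↥(tiles S P)) :=
  {σ | ∃ s ∈ S, s '' P = P ∧ ∀ T : ↥(tiles S P), ((σ T : Set X) : Set X) = s '' ((T : Set X) : Set X)}



/-- The state of approximation at level `i` of the positioned chain of a maximal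
chain `C`: `α_1 = X`, and for `i > 1`, `α_i` is the entry of the positioned chain
at the largest filled position `j < i`.  Since position `d(P)` of the positioned
chain of `C : X = P₁ ⊋ ⋯ ⊋ P_k` holds the successor of `P` for each non-minimal
member `P`, `α_i` is the smallest member of `C` whose immediate predecessor in
`C` has depth `< i`. -/
noncomputable def alpha (S : Set (X → X)) (C : Set (Set X)) (i : ℕ) : Set X :=
  if i ≤ 1 then Set.univ
  else ⋂₀ {Q | Q ∈ C ∧ ∀ P : Set X,
    (P ∈ C ∧ Q ⊂ P ∧ ∀ R ∈ C, Q ⊂ R → P ⊆ R) → depth S P < i}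

/-- The chosen equivalence-class representatives of depth `i`. -/
def RepsAt (S : Set (X → X)) (rep : Set X → Set X) (i : ℕ) : Set (Set X) :=
  {R | R ∈ extImgs S ∧ nonSingleton R ∧ rep R = R ∧ depth S R = i}

/-- States of the `i`-th holonomy component `ℋ_i`:
`none` is the extra state `*`, and `some (R, T)` is the tile `T` in the copy of
`tiles(R)` in the disjoint union, for `R` a representative of depth `i`. -/
def ValidAt (S : Set (X → X)) (rep : Set X → Set X) (i : ℕ)
    (t : Option (Set X × Set X)) : Prop :=
  t = none ∨ ∃ R T : Set X, t = some (R, T) ∧ R ∈ RepsAt S rep i ∧ T ∈ tiles S R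

/-- Transformations of the `i`-th holonomy component `ℋ_i` (on its state set):
either a constant map to a state of `ℋ_i`, or an element `(h₁,…,h_k)` of
`H_{R₁} × ⋯ × H_{R_k}` acting on the copy of `tiles(R_j)` by `h_j` (that is, by
`T ↦ T·s` for some `s` stabilizing `R_j`) and fixing `*`. -/
def IsHolTrans (S : Set (X → X)) (rep : Set X → Set X) (i : ℕ)
    (φ : Option (Set X × Set X) → Option (Set X × Set X)) : Prop :=
  (∃ t₀, ValidAt S rep i t₀ ∧ ∀ t, ValidAt S rep i t → φ t = t₀) ∨
  (φ none = none ∧ ∀ R ∈ RepsAt S rep i, ∃ s ∈ S, s '' R = R ∧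
    ∀ T ∈ tiles S R, φ (some (R, T)) = some (R, s '' T))

/-- `F` is an element of the wreath product `ℋ₁ ≀ ⋯ ≀ ℋ_d` of the holonomy
components: the action on each coordinate `i` depends only on the coordinates
above it (through a dependency function), and on every valid state this
component action is a transformation of `ℋ_i`. -/
def IsCascade (S : Set (X → X)) (rep : Set X → Set X) (d : ℕ)
    (F : (Fin d → Option (Set X × Set X)) → (Fin d → Option (Set X × Set X))) : Prop :=
  ∀ i : Fin d, ∃ g : (Fin d → Option (Set X × Set X)) →
      (Option (Set X × Set X) → Option (Set X × Set X)),
    (∀ t, F t i = g t (t i)) ∧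
    (∀ t t', (∀ j : Fin d, j < i → t j = t' j) → g t = g t') ∧
    (∀ t, (∀ j : Fin d, ValidAt S rep (j.val + 1) (t j)) →
      IsHolTrans S rep (i.val + 1) (g t))



/-! ### Auxiliary lemmas -/

section Aux

variable {S : Set (X → X)}

lemma sub_refl (S : Set (X → X)) (P : Set X) : Subduction S P P :=
  ⟨id, Set.mem_insert _ _, by simp⟩

lemma sub_of_subset {P Q : Set X} (h : P ⊆ Q) : Subduction S P Q :=
  ⟨id, Set.mem_insert _ _, by simpa⟩

lemma sub_image {s : X → X} (hs : s ∈ S) (Q : Set X) : Subduction S (s '' Q) Q :=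
  ⟨s, Set.mem_insert_iff.mpr (Or.inr hs), subset_rfl⟩

lemma comp_mem (hS : ∀ s ∈ S, ∀ t ∈ S, (fun x => t (s x)) ∈ S)
    {s t : X → X} (hs : s ∈ insert (id : X → X) S) (ht : t ∈ insert (id : X → X) S) :
    ∃ u ∈ insert (id : X → X) S, ∀ x, u x = s (t x) := by
  rcases Set.mem_insert_iff.mp hs with rfl | hs
  · exact ⟨t, ht, fun x => rfl⟩
  · rcases Set.mem_insert_iff.mp ht with rfl | ht
    · exact ⟨s, Set.mem_insert_iff.mpr (Or.inr hs), fun x => rfl⟩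
    · exact ⟨fun x => s (t x), Set.mem_insert_iff.mpr (Or.inr (hS t ht s hs)), fun x => rfl⟩

lemma sub_trans (hS : ∀ s ∈ S, ∀ t ∈ S, (fun x => t (s x)) ∈ S)
    {P Q R : Set X} (h1 : Subduction S P Q) (h2 : Subduction S Q R) :
    Subduction S P R := by
  obtain ⟨s, hs, hPs⟩ := h1
  obtain ⟨t, ht, hQt⟩ := h2
  obtain ⟨u, hu, humem⟩ := comp_mem hS hs ht
  refine ⟨u, hu, fun x hx => ?_⟩
  obtain ⟨q, hq, rfl⟩ := hPs hx
  obtain ⟨r, hr, hrq⟩ := hQt hq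
  exact ⟨r, hr, by rw [humem, hrq]⟩

lemma ssub_trans (hS : ∀ s ∈ S, ∀ t ∈ S, (fun x => t (s x)) ∈ S)
    {P Q R : Set X} (h1 : SSubduction S P Q) (h2 : SSubduction S Q R) :
    SSubduction S P R :=
  ⟨sub_trans hS h1.1 h2.1, fun h => h2.2 (sub_trans hS h h1.1)⟩

lemma ssub_ne {P Q : Set X} (h : SSubduction S P Q) : P ≠ Q := by
  rintro rfl
  exact h.2 (sub_refl S P)

/-- The set of chain lengths defining the height. -/
def hset (S : Set (X → X)) (Q : Set X) : Set ℕ :=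
  {n : ℕ | ∃ l : List (Set X), l.length = n ∧
    (∀ R ∈ l, R ∈ extImgs S ∧ nonSingleton R) ∧
    l.Chain' (SSubduction S) ∧ l.getLast? = some Q}

lemma height_eq (S : Set (X → X)) (Q : Set X) : height S Q = sSup (hset S Q) := rfl

lemma hset_bdd [Finite X] (hS : ∀ s ∈ S, ∀ t ∈ S, (fun x => t (s x)) ∈ S)
    (Q : Set X) : BddAbove (hset S Q) := by
  haveI : Fintype (Set X) := Fintype.ofFinite _
  refine ⟨Fintype.card (Set X), fun n hn => ?_⟩
  obtain ⟨l, hlen, _, hchain, _⟩ := hn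
  haveI : IsTrans (Set X) (SSubduction S) := ⟨fun _ _ _ => ssub_trans hS⟩
  have hpw : l.Pairwise (SSubduction S) := List.isChain_iff_pairwise.mp hchain
  have hnd : l.Nodup := hpw.imp (fun h => ssub_ne h)
  simpa [hlen] using hnd.length_le_card

lemma hset_mono (hS : ∀ s ∈ S, ∀ t ∈ S, (fun x => t (s x)) ∈ S)
    {A B : Set X} (hAB : Subduction S A B) (hBI : B ∈ extImgs S)
    (hBns : nonSingleton B) {n : ℕ} (hn : n ∈ hset S A) :
    ∃ m ∈ hset S B, n ≤ m := by
  obtain ⟨l, hlen, hmem, hchain, hlast⟩ := hn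
  have hlne : l ≠ [] := by
    rintro rfl
    simp at hlast
  have hAlast : l.getLast hlne = A := by
    have := List.getLast?_eq_getLast hlne
    rw [this] at hlast
    exact (Option.some_injective _ hlast)
  by_cases hBA : Subduction S B A
  · -- replace the last element A by B
    refine ⟨n, ⟨l.dropLast ++ [B], ?_, ?_, ?_, ?_⟩, le_refl n⟩
    · rw [List.length_append, List.length_singleton, List.length_dropLast]
      have hl1 : 0 < l.length := List.length_pos_iff.mpr hlne
      omega
    · intro R hR
      rcases List.mem_append.mp hR with hR | hR
      · exact hmem R ((List.dropLast_sublist l).subset hR)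
      · rw [List.mem_singleton.mp hR]
        exact ⟨hBI, hBns⟩
    · have hdecomp : l.dropLast ++ [A] = l := by
        rw [← hAlast]
        exact List.dropLast_append_getLast hlne
      rw [← hdecomp] at hchain
      obtain ⟨h1, _, h3⟩ := List.isChain_append.mp hchain
      refine List.isChain_append.mpr ⟨h1, List.isChain_singleton _, ?_⟩
      intro x hx y hy
      have hxA : SSubduction S x A := h3 x hx A (by simp)
      have hyB : y = B := by simpa using hy.symm
      subst hyB
      exact ⟨sub_trans hS hxA.1 hAB, fun h => hxA.2 (sub_trans hS hAB h)⟩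
    · exact List.getLast?_concat
  · -- append B
    refine ⟨n + 1, ⟨l ++ [B], by simp [hlen], ?_, ?_, List.getLast?_concat⟩, by omega⟩
    · intro R hR
      rcases List.mem_append.mp hR with hR | hR
      · exact hmem R hR
      · rw [List.mem_singleton.mp hR]
        exact ⟨hBI, hBns⟩
    · refine List.isChain_append.mpr ⟨hchain, List.isChain_singleton _, ?_⟩
      intro x hx y hy
      have hxA : x = A := by
        rw [hlast] at hx
        simpa using hx.symm
      have hyB : y = B := by simpa using hy.symm
      subst hxA; subst hyB
      exact ⟨hAB, hBA⟩

lemma height_mono [Finite X] (hS : ∀ s ∈ S, ∀ t ∈ S, (fun x => t (s x)) ∈ S)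
    {A B : Set X} (hAB : Subduction S A B) (hBI : B ∈ extImgs S)
    (hBns : nonSingleton B) : height S A ≤ height S B := by
  rw [height_eq, height_eq]
  rcases Set.eq_empty_or_nonempty (hset S A) with he | hne
  · rw [he]
    simp
  · refine csSup_le hne (fun n hn => ?_)
    obtain ⟨m, hm, hnm⟩ := hset_mono hS hAB hBI hBns hn
    exact hnm.trans (le_csSup (hset_bdd hS B) hm)

lemma mem_extImgs_nonempty [Nonempty X] {P : Set X} (hP : P ∈ extImgs S) :
    P.Nonempty := by
  rcases hP with (⟨t, _, rfl⟩ | hP) | ⟨x, rfl⟩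
  · exact (Set.univ_nonempty).image t
  · rw [Set.mem_singleton_iff.mp hP]
    exact Set.univ_nonempty
  · exact Set.singleton_nonempty x

lemma singleton_mem_extImgs (x : X) : ({x} : Set X) ∈ extImgs S :=
  Or.inr ⟨x, rfl⟩

lemma univ_mem_extImgs : (Set.univ : Set X) ∈ extImgs S :=
  Or.inl (Or.inr rfl)

lemma univ_mem_maxchain (C : MaxChain S) : (Set.univ : Set X) ∈ C.val := by
  obtain ⟨hsub, hchain, hmax⟩ := C.2
  have hins : insert (Set.univ : Set X) C.val = C.val := by
    refine hmax _ ?_ ?_ (Set.subset_insert _ _)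
    · intro P hP
      rcases Set.mem_insert_iff.mp hP with rfl | hP
      · exact univ_mem_extImgs
      · exact hsub hP
    · exact hchain.insert (fun b _ _ => Or.inr (Set.subset_univ b))
  rw [← hins]
  exact Set.mem_insert _ _

/-- minimum of a nonempty subfamily of a finite chain -/
lemma chain_min [Finite X] {A : Set (Set X)} (hchain : IsChain (· ⊆ ·) A)
    (hne : A.Nonempty) : ∃ m ∈ A, ∀ a ∈ A, m ⊆ a := by
  obtain ⟨m, hm, hmin⟩ := Set.Finite.exists_minimalFor id A (Set.toFinite A) hne
  refine ⟨m, hm, fun a ha => ?_⟩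
  by_cases hma : m = a
  · rw [hma]
  · rcases hchain hm ha hma with h | h
    · exact h
    · exact le_of_eq (show m = a from subset_antisymm (hmin ha h) h)

end Aux

/-- the action of a consistent lift respects the states of
approximation: `(α_i(C^pos))·s ⊆ α_i((ŝ(C))^pos)`. -/
theorem alpha_act_subset {X : Type*} [Fintype X] [Nonempty X]
    (S : Set (X → X)) (hS : ∀ s ∈ S, ∀ t ∈ S, (fun x => t (s x)) ∈ S)
    (s : X → X) (hs : s ∈ S)
    (sh : MaxChain S → MaxChain S)
    (hlift : IsLift S s sh) (hcons : Consistent S s sh)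
    (C : MaxChain S)
    (i : ℕ) (hi1 : 1 ≤ i) (hi2 : i ≤ height S (Set.univ : Set X)) :
    s '' alpha S C.val i ⊆ alpha S (sh C).val i := by
  classical
  by_cases hile : i ≤ 1
  · simp [alpha, hile]
  simp only [alpha, if_neg hile]
  set A := {Q | Q ∈ C.val ∧ ∀ P : Set X,
    (P ∈ C.val ∧ Q ⊂ P ∧ ∀ R ∈ C.val, Q ⊂ R → P ⊆ R) → depth S P < i} with hAdef
  have hAne : A.Nonempty := by
    refine ⟨Set.univ, univ_mem_maxchain C, fun P hP => ?_⟩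
    exact absurd (Set.eq_univ_of_univ_subset hP.2.1.subset).symm hP.2.1.ne
  have hAchain : IsChain (· ⊆ ·) A := C.2.2.1.mono (fun Q hQ => hQ.1)
  obtain ⟨Qmin, hQA, hQminmin⟩ := chain_min hAchain hAne
  intro y hy
  rw [Set.mem_sInter]
  intro Q' hQ'
  obtain ⟨hQ'mem, hQ'cond⟩ := hQ'
  have hysQ : y ∈ s '' Qmin := by
    obtain ⟨z, hz, rfl⟩ := hy
    exact ⟨z, (Set.sInter_subset_of_mem hQA) hz, rfl⟩
  have hsQmem : s '' Qmin ∈ (sh C).val :=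
    hlift C (Set.mem_image_of_mem _ hQA.1)
  by_cases heq : s '' Qmin = Q'
  · rw [← heq]; exact hysQ
  rcases (sh C).2.2.1 hsQmem hQ'mem heq with hsub | hsub
  · exact hsub hysQ
  exfalso
  have hlt : Q' ⊂ s '' Qmin :=
    HasSubset.Subset.ssubset_of_ne hsub (fun h => heq h.symm)
  by_cases hsing : ∃ y0 : X, s '' Qmin = {y0}
  · obtain ⟨y0, hy0⟩ := hsing
    rw [hy0] at hlt
    rcases Set.subset_singleton_iff_eq.mp hlt.subset with h0 | h0
    · exact (mem_extImgs_nonempty ((sh C).2.1 hQ'mem)).ne_empty h0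
    · exact hlt.ne h0
  -- `s '' Qmin` is not a singleton, hence neither is `Qmin`
  have hQminns : nonSingleton Qmin := by
    rintro ⟨x, hx⟩
    exact hsing ⟨s x, by rw [hx, Set.image_singleton]⟩
  -- there is a member of `C` strictly below `Qmin`
  have hbot : ∃ R ∈ C.val, R ⊂ Qmin := by
    by_contra h
    push_neg at h
    obtain ⟨x, hx⟩ := mem_extImgs_nonempty (C.2.1 hQA.1)
    have hxq : ({x} : Set X) ⊆ Qmin := Set.singleton_subset_iff.mpr hx
    have hxC : ({x} : Set X) ∈ C.val := by
      obtain ⟨hsub', hchain', hmax'⟩ := C.2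
      have hins : insert ({x} : Set X) C.val = C.val := by
        refine hmax' _ ?_ ?_ (Set.subset_insert _ _)
        · intro P hP
          rcases Set.mem_insert_iff.mp hP with rfl | hP
          · exact singleton_mem_extImgs x
          · exact hsub' hP
        · refine hchain'.insert (fun b hb hne => ?_)
          by_cases hbq : b = Qmin
          · subst hbq; exact Or.inl hxq
          rcases hchain' hb hQA.1 hbq with h1 | h1
          · exact absurd (HasSubset.Subset.ssubset_of_ne h1 hbq) (h b hb)
          · exact Or.inl (hxq.trans h1)
      rw [← hins]; exact Set.mem_insert _ _
    have hnlt := h {x} hxC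
    have hqx : Qmin = {x} := by
      by_contra hne
      exact hnlt (HasSubset.Subset.ssubset_of_ne hxq (fun h' => hne h'.symm))
    exact hQminns ⟨x, hqx⟩
  obtain ⟨R0, hR0C, hR0lt⟩ := hbot
  set T2 := {R | R ∈ C.val ∧ R ⊂ Qmin} with hT2def
  obtain ⟨Q2, hQ2T2, hQ2max⟩ :=
    Set.Finite.exists_maximalFor id T2 (Set.toFinite T2) ⟨R0, hR0C, hR0lt⟩
  have hQ2A : Q2 ∉ A := by
    intro hmem
    exact hQ2T2.2.ne (subset_antisymm hQ2T2.2.subset (hQminmin Q2 hmem))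
  have hQ2cond : ¬ ∀ P : Set X,
      (P ∈ C.val ∧ Q2 ⊂ P ∧ ∀ R ∈ C.val, Q2 ⊂ R → P ⊆ R) → depth S P < i :=
    fun hcond => hQ2A ⟨hQ2T2.1, hcond⟩
  push_neg at hQ2cond
  obtain ⟨P, hP, hdP⟩ := hQ2cond
  have hPQmin : P = Qmin := by
    refine subset_antisymm (hP.2.2 Qmin hQA.1 hQ2T2.2) ?_
    by_cases hPq : P = Qmin
    · rw [hPq]
    rcases C.2.2.1 hP.1 hQA.1 hPq with h1 | h1
    · exfalso
      have hq2p : Q2 = P :=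
        subset_antisymm hP.2.1.subset (hQ2max ⟨hP.1, HasSubset.Subset.ssubset_of_ne h1 hPq⟩ hP.2.1.subset)
      exact hP.2.1.ne (show Q2 = P from hq2p)
    · exact h1
  rw [hPQmin] at hdP
  -- the predecessor `P'` of `Q'` in `sh C`
  obtain ⟨P', hP'T, hP'min⟩ := chain_min
    (show IsChain (· ⊆ ·) {R | R ∈ (sh C).val ∧ Q' ⊂ R} from
      (sh C).2.2.1.mono (fun R hR => hR.1))
    ⟨s '' Qmin, hsQmem, hlt⟩
  have hdP' : depth S P' < i :=
    hQ'cond P' ⟨hP'T.1, hP'T.2, fun R hR hQR => hP'min R ⟨hR, hQR⟩⟩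
  have hP'sub : P' ⊆ s '' Qmin := hP'min _ ⟨hsQmem, hlt⟩
  have h1 : height S P' ≤ height S (s '' Qmin) :=
    height_mono hS (sub_of_subset hP'sub) ((sh C).2.1 hsQmem) hsing
  have h2 : height S (s '' Qmin) ≤ height S Qmin :=
    height_mono hS (sub_image hs Qmin) (C.2.1 hQA.1) hQminns
  simp only [depth] at hdP hdP'
  omega

end Holonomy
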